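/- Let x ∈ ℤ₂, k ∈ ℕ, and a ∈ ℕ with a < 2^k, and set m = α(a). Then Φ(a + 2^k·x) = Φ(a) + (Φ(x)/3^m)·2^k, where division by 3^m means multiplication by the inverse of 3^m in ℤ₂. -/

import Mathlib

noncomputable section

/-- The inverse of `3` in the ring of 2-adic integers. -/
def inv3 : ℤ_[2] := Ring.inverse 3

/-- The `j`-th binary digit of a 2-adic integer (as `0` or `1`). -/
def dig (x : ℤ_[2]) (j : ℕ) : ℕ := if Nat.testBit (x.appr (j + 1)) j then 1 else 0

/-- The number of one digits of `x` in positions `< j`. -/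
def digCount (x : ℤ_[2]) (j : ℕ) : ℕ := ∑ i ∈ Finset.range j, dig x i

/-- Bernstein's formula for the 3x+1 conjugacy map `Φ`:
if `x = ∑_i 2^{d_i}` with `d_0 < d_1 < ⋯`, then `Φ x = -∑_i 2^{d_i} 3^{-i}`. -/
def Phi (x : ℤ_[2]) : ℤ_[2] :=
  -∑' j : ℕ, (dig x j : ℤ_[2]) * 2 ^ j * inv3 ^ digCount x j

/-- `L_k(x)`: the unique natural number `< 2^k` congruent to `x` mod `2^k`. -/
def Lk (k : ℕ) (x : ℤ_[2]) : ℕ := x.appr k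

theorem two_pow_dvd_sub_appr (k : ℕ) (x : ℤ_[2]) :
    (2 : ℤ_[2]) ^ k ∣ x - (x.appr k : ℤ_[2]) := by
  have h := PadicInt.appr_spec k x
  rw [Ideal.mem_span_singleton] at h
  exact_mod_cast h

theorem exists_Rk (k : ℕ) (x : ℤ_[2]) :
    ∃ z : ℤ_[2], x = (x.appr k : ℤ_[2]) + 2 ^ k * z := by
  obtain ⟨c, hc⟩ := two_pow_dvd_sub_appr k x
  exact ⟨c, by rw [← hc]; ring⟩

/-- `R_k(x)`: the unique 2-adic integer with `x = L_k(x) + 2^k · R_k(x)`. -/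
def Rk (k : ℕ) (x : ℤ_[2]) : ℤ_[2] := (exists_Rk k x).choose

/-- `α(a)`: the number of ones in the binary expansion of `a`. -/
def alphaNat (a : ℕ) : ℕ := (Nat.bits a).count true

/-- `b̄_{v,∞} = b · ∑_{i=0}^∞ 2^{v i}` as a 2-adic integer. -/
def bbar (b v : ℕ) : ℤ_[2] := (b : ℤ_[2]) * ∑' i : ℕ, (2 : ℤ_[2]) ^ (v * i)

/-- `b̄_{v,t} = b · ∑_{i=0}^{t-1} 2^{v i}` as a natural number. -/
def bbarFin (b v t : ℕ) : ℕ := b * ∑ i ∈ Finset.range t, 2 ^ (v * i)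

/-- The farPoint `fP(x,k)`: the least `r` such that no 2-adic congruent to `x`
mod `2^k` is a fixed point of `Φ` mod `2^{k+r}`, and `∞` if no such `r` exists. -/
def fP (x k : ℕ) : ℕ∞ :=
  sInf ((↑) '' {r : ℕ | ∀ z : ℤ_[2],
    (2 : ℤ_[2]) ^ k ∣ z - (x : ℤ_[2]) → ¬ (2 : ℤ_[2]) ^ (k + r) ∣ Phi z - z})

end


-- uniqueness of appr
lemma appr_unique (x : ℤ_[2]) (n : ℕ) (b : ℕ) (hb : b < 2 ^ n)
    (hdvd : (2 : ℤ_[2]) ^ n ∣ x - (b : ℤ_[2])) : x.appr n = b := by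
  have h1 := two_pow_dvd_sub_appr n x
  have h2 : (2 : ℤ_[2]) ^ n ∣ (((b : ℤ) - (x.appr n : ℤ) : ℤ) : ℤ_[2]) := by
    have := dvd_sub h1 hdvd
    have e : x - (x.appr n : ℤ_[2]) - (x - (b : ℤ_[2])) = (((b : ℤ) - (x.appr n : ℤ) : ℤ) : ℤ_[2]) := by
      push_cast; ring
    rwa [e] at this
  have h3 : ((2 : ℤ) ^ n) ∣ ((b : ℤ) - (x.appr n : ℤ)) := by
    have := (PadicInt.pow_p_dvd_int_iff (p := 2) n ((b : ℤ) - (x.appr n : ℤ))).mp (by exact_mod_cast h2)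
    exact_mod_cast this
  have hlt := PadicInt.appr_lt x n
  have hb' : (b : ℤ) < 2 ^ n := by exact_mod_cast hb
  have hl' : ((x.appr n : ℤ)) < 2 ^ n := by exact_mod_cast hlt
  have hz : (b : ℤ) - (x.appr n : ℤ) = 0 := by
    refine Int.eq_zero_of_abs_lt_dvd h3 ?_
    rw [abs_lt]
    constructor <;> omega
  omega

lemma dig_natCast (a j : ℕ) : dig (a : ℤ_[2]) j = if a.testBit j then 1 else 0 := by
  have happr : ((a : ℤ_[2])).appr (j + 1) = a % 2 ^ (j + 1) := by
    refine appr_unique _ _ _ (Nat.mod_lt _ (by positivity)) ?_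
    have h : (2 ^ (j + 1) : ℕ) ∣ a - a % 2 ^ (j + 1) := Nat.dvd_sub_mod a
    obtain ⟨c, hc⟩ := h
    refine ⟨(c : ℤ_[2]), ?_⟩
    have : (a : ℤ_[2]) = (a % 2 ^ (j+1) : ℕ) + ((2 ^ (j+1) * c : ℕ) : ℤ_[2]) := by
      rw [← hc]
      have := Nat.mod_le a (2 ^ (j+1))
      push_cast [Nat.cast_sub this]
      ring
    rw [this]; push_cast; ring
  rw [dig, happr, Nat.testBit_mod_two_pow]
  simp [Nat.lt_succ_iff]

lemma alpha_rec (a : ℕ) (ha : a ≠ 0) :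
    alphaNat a = (if a.testBit 0 then 1 else 0) + alphaNat (a / 2) := by
  rcases Nat.even_or_odd a with he | ho
  · obtain ⟨c, hc⟩ := he
    have hc' : a = 2 * c := by omega
    have hcne : c ≠ 0 := by omega
    subst hc'
    rw [alphaNat, Nat.bit0_bits c hcne]
    simp [alphaNat, Nat.mul_div_cancel_left, Nat.testBit_eq_decide_div_mod_eq, Nat.mul_mod_right]
  · obtain ⟨c, hc⟩ := ho
    subst hc
    rw [alphaNat, Nat.bit1_bits c]
    have : (2 * c + 1) / 2 = c := by omega
    have hmod : (2 * c + 1) % 2 = 1 := by omega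
    simp [alphaNat, this, Nat.testBit_eq_decide_div_mod_eq, hmod]
    omega

lemma sum_testBit_eq_alpha : ∀ k a, a < 2 ^ k →
    (∑ j ∈ Finset.range k, if a.testBit j then 1 else 0) = alphaNat a := by
  intro k
  induction k with
  | zero => intro a ha; interval_cases a; simp [alphaNat]
  | succ k ih =>
    intro a ha
    rw [Finset.sum_range_succ']
    rcases eq_or_ne a 0 with rfl | hne
    · simp [alphaNat]
    · have h2 : a / 2 < 2 ^ k := by
        have : a < 2 * 2 ^ k := by rw [← pow_succ']; exact ha
        omega
      have := ih (a / 2) h2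
      rw [alpha_rec a hne]
      simp only [Nat.testBit_add_one]
      omega

lemma phi_summable (y : ℤ_[2]) :
    Summable (fun j => (dig y j : ℤ_[2]) * 2 ^ j * inv3 ^ digCount y j) := by
  refine Summable.of_norm_bounded (g := fun j => (2 : ℝ)⁻¹ ^ j)
    (summable_geometric_of_lt_one (by norm_num) (by norm_num)) (fun j => ?_)
  have h2 : ‖(2 : ℤ_[2]) ^ j‖ = (2 : ℝ)⁻¹ ^ j := by
    rw [norm_pow, show ((2:ℤ_[2])) = ((2:ℕ):ℤ_[2]) by norm_cast,
      PadicInt.norm_p (p := 2)]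
    norm_num
  calc ‖(dig y j : ℤ_[2]) * 2 ^ j * inv3 ^ digCount y j‖
      = ‖(dig y j : ℤ_[2])‖ * ‖(2 : ℤ_[2]) ^ j‖ * ‖inv3 ^ digCount y j‖ := by
        rw [norm_mul, norm_mul]
    _ ≤ 1 * ((2 : ℝ)⁻¹ ^ j) * 1 := by
        rw [h2]
        gcongr <;> exact PadicInt.norm_le_one _
    _ = (2 : ℝ)⁻¹ ^ j := by ring

section main
variable (x : ℤ_[2]) (k : ℕ) (a : ℕ)

lemma dig_low (ha : a < 2 ^ k) (j : ℕ) (hj : j < k) :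
    dig ((a : ℤ_[2]) + 2 ^ k * x) j = dig (a : ℤ_[2]) j := by
  have happr : ((a : ℤ_[2]) + 2 ^ k * x).appr (j + 1) = a % 2 ^ (j + 1) := by
    refine appr_unique _ _ _ (Nat.mod_lt _ (by positivity)) ?_
    have h1 : (2 : ℤ_[2]) ^ (j + 1) ∣ (a : ℤ_[2]) - ((a % 2 ^ (j + 1) : ℕ) : ℤ_[2]) := by
      have hdv : (2 ^ (j + 1) : ℕ) ∣ a - a % 2 ^ (j + 1) := Nat.dvd_sub_mod a
      obtain ⟨c, hc⟩ := hdv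
      refine ⟨(c : ℤ_[2]), ?_⟩
      have h := Nat.mod_le a (2 ^ (j + 1))
      have : (a : ℤ_[2]) - ((a % 2 ^ (j+1) : ℕ) : ℤ_[2]) = ((a - a % 2 ^ (j+1) : ℕ) : ℤ_[2]) := by
        push_cast [Nat.cast_sub h]; ring
      rw [this, hc]; push_cast; ring
    have h2 : (2 : ℤ_[2]) ^ (j + 1) ∣ 2 ^ k * x :=
      Dvd.dvd.mul_right (pow_dvd_pow 2 hj) x
    have := dvd_add h1 h2
    have e : (a : ℤ_[2]) - ((a % 2 ^ (j + 1) : ℕ) : ℤ_[2]) + 2 ^ k * x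
        = ((a : ℤ_[2]) + 2 ^ k * x) - ((a % 2 ^ (j + 1) : ℕ) : ℤ_[2]) := by ring
    rwa [e] at this
  rw [dig, happr, dig_natCast, Nat.testBit_mod_two_pow]
  simp [Nat.lt_succ_iff]

lemma dig_high (ha : a < 2 ^ k) (i : ℕ) :
    dig ((a : ℤ_[2]) + 2 ^ k * x) (k + i) = dig x i := by
  set b := x.appr (i + 1) with hb
  have hblt : b < 2 ^ (i + 1) := PadicInt.appr_lt x (i + 1)
  have happr : ((a : ℤ_[2]) + 2 ^ k * x).appr (k + i + 1) = a + 2 ^ k * b := by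
    refine appr_unique _ _ _ ?_ ?_
    · calc a + 2 ^ k * b < 2 ^ k + 2 ^ k * b := by omega
        _ = 2 ^ k * (b + 1) := by ring
        _ ≤ 2 ^ k * 2 ^ (i + 1) := Nat.mul_le_mul_left _ (by omega)
        _ = 2 ^ (k + i + 1) := by rw [← pow_add]; ring_nf
    · obtain ⟨c, hc⟩ := two_pow_dvd_sub_appr (i + 1) x
      refine ⟨(c : ℤ_[2]), ?_⟩
      have : ((a : ℤ_[2]) + 2 ^ k * x) - ((a + 2 ^ k * b : ℕ) : ℤ_[2])
          = 2 ^ k * (x - (b : ℤ_[2])) := by push_cast; ring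
      rw [this, hc, pow_add, pow_add]; ring
  rw [dig, happr, dig]
  congr 1
  rw [Nat.testBit_eq_decide_div_mod_eq, Nat.testBit_eq_decide_div_mod_eq]
  have hd : (a + 2 ^ k * b) / 2 ^ (k + i) = b / 2 ^ i := by
    rw [pow_add, ← Nat.div_div_eq_div_mul, Nat.add_mul_div_left _ _ (by positivity),
      Nat.div_eq_of_lt ha, Nat.zero_add]
  rw [hd]

lemma digCount_high (ha : a < 2 ^ k) (i : ℕ) :
    digCount ((a : ℤ_[2]) + 2 ^ k * x) (k + i) = alphaNat a + digCount x i := by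
  rw [digCount, Finset.sum_range_add]
  congr 1
  · rw [← sum_testBit_eq_alpha k a ha]
    refine Finset.sum_congr rfl fun j hj => ?_
    rw [dig_low x k a ha j (Finset.mem_range.mp hj), dig_natCast]
  · exact Finset.sum_congr rfl fun j _ => dig_high x k a ha j

end main


/-- pseudohomomorphism: for `a < 2^k` and `m = α(a)`,
`Φ(a + 2^k x) = Φ(a) + (Φ(x)/3^m)·2^k`. -/
theorem stmt7 (x : ℤ_[2]) (k : ℕ) (a : ℕ) (ha : a < 2 ^ k) :
    Phi ((a : ℤ_[2]) + 2 ^ k * x) =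
      Phi (a : ℤ_[2]) + Phi x * inv3 ^ alphaNat a * 2 ^ k := by
  set y := (a : ℤ_[2]) + 2 ^ k * x with hy
  set f : ℕ → ℤ_[2] := fun j => (dig y j : ℤ_[2]) * 2 ^ j * inv3 ^ digCount y j with hf
  have hsum : Summable f := phi_summable y
  have hsplit := Summable.sum_add_tsum_nat_add (f := f) k hsum
  have hlow : ∑ j ∈ Finset.range k, f j = -Phi (a : ℤ_[2]) := by
    have hz : ∀ j ∉ Finset.range k,
        (dig (a : ℤ_[2]) j : ℤ_[2]) * 2 ^ j * inv3 ^ digCount (a : ℤ_[2]) j = 0 := by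
      intro j hj
      rw [Finset.mem_range, not_lt] at hj
      have hb : Nat.testBit a j = false :=
        Nat.testBit_eq_false_of_lt (lt_of_lt_of_le ha (pow_le_pow_right₀ (by norm_num) hj))
      rw [dig_natCast, hb]
      simp
    rw [Phi, tsum_eq_sum hz, neg_neg]
    refine Finset.sum_congr rfl fun j hj => ?_
    have hj' := Finset.mem_range.mp hj
    have hd : dig y j = dig (a : ℤ_[2]) j := dig_low x k a ha j hj'
    have hc : digCount y j = digCount (a : ℤ_[2]) j :=
      Finset.sum_congr rfl fun i hi =>
        dig_low x k a ha i (lt_of_lt_of_le (Finset.mem_range.mp hi) (le_of_lt hj'))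
    simp only [hf, hd, hc]
  have hhigh : ∑' i : ℕ, f (i + k) = (-Phi x) * (inv3 ^ alphaNat a * 2 ^ k) := by
    have hterm : ∀ i : ℕ, f (i + k) =
        ((dig x i : ℤ_[2]) * 2 ^ i * inv3 ^ digCount x i) * (inv3 ^ alphaNat a * 2 ^ k) := by
      intro i
      have h1 : dig y (k + i) = dig x i := dig_high x k a ha i
      have h2 : digCount y (k + i) = alphaNat a + digCount x i := digCount_high x k a ha i
      simp only [hf, add_comm i k, h1, h2, pow_add]
      ring
    rw [tsum_congr hterm, Summable.tsum_mul_right _ (phi_summable x)]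
    congr 1
    rw [Phi, neg_neg]
  have hPx : Phi y = -∑' j : ℕ, f j := rfl
  rw [hPx, ← hsplit, hlow, hhigh]
  ring
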